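/- Let X be a random vector in [0,∞)^d satisfying multivariate regular variation: for every Borel set B ⊂ {x ≥ 0 : ‖x‖_∞ > 1} with ν(∂B) = 0, P(X/u ∈ B | ‖X‖_∞ > u) → ν(B) as u → ∞, where ν is extended homogeneously of degree −1 to all Borel sets bounded away from the origin. Let r be a measurable, 1-homogeneous risk functional with Ω_r = {x : r(x) > 1} bounded away from the origin and ν(∂Ω_r) = 0, ν(Ω_r) > 0. Then for any Borel set B ⊂ Ω_r with ν(∂B) = 0, lim_{u→∞} P(X ∈ uB | r(X) > u) = ν(B)/ν(Ω_r). -/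
import Mathlib


open MeasureTheory Set Filter Topology Pointwise

private lemma ratio_div_helper {a b c : ℝ} (hab : b = 0 → a = 0) (hbc : c = 0 → b = 0) :
    a / b = (a / c) / (b / c) := by
  rcases eq_or_ne c 0 with hc | hc
  · simp [hc, hbc hc, hab (hbc hc)]
  · rw [div_div_div_cancel_right₀ hc]

/-- under multivariate regular variation of `X` with exponent measure `ν`
(extended homogeneously of degree `-1`), for a measurable 1-homogeneous risk functional `r`
with `Ω_r` bounded away from the origin, `ν (∂Ω_r) = 0` and `ν Ω_r > 0`, one has
`P(X ∈ uB | r(X) > u) → ν B / ν Ω_r` as `u → ∞` for every Borel `B ⊆ Ω_r` with `ν (∂B) = 0`. -/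
theorem stmt1 {d : ℕ} {Ω : Type*} [MeasurableSpace Ω] (μ : Measure Ω) [IsProbabilityMeasure μ]
    (X : Ω → (Fin d → ℝ)) (hX : Measurable X)
    (ν : Measure (Fin d → ℝ)) (r : (Fin d → ℝ) → ℝ) (hr : Measurable r)
    (hrhom : ∀ t : ℝ, 0 < t → ∀ x : Fin d → ℝ, r (t • x) = t * r x)
    (hνhom : ∀ t : ℝ, 0 < t → ∀ B : Set (Fin d → ℝ), MeasurableSet B →
      (∃ ε > 0, ∀ x ∈ B, ε ≤ ‖x‖) → ν (t • B) = ENNReal.ofReal t⁻¹ * ν B)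
    (hMRV : ∀ B : Set (Fin d → ℝ), MeasurableSet B → B ⊆ {x | 1 < ‖x‖} →
      ν (frontier B) = 0 →
      Tendsto (fun u : ℝ =>
          (μ {ω | u⁻¹ • X ω ∈ B}).toReal / (μ {ω | u < ‖X ω‖}).toReal)
        atTop (𝓝 (ν B).toReal))
    (hΩaway : ∃ ε > 0, ∀ x ∈ {x : Fin d → ℝ | 1 < r x}, ε ≤ ‖x‖)
    (hΩfr : ν (frontier {x : Fin d → ℝ | 1 < r x}) = 0)
    (hΩpos : 0 < ν {x : Fin d → ℝ | 1 < r x})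
    (hΩfin : ν {x : Fin d → ℝ | 1 < r x} ≠ ⊤) :
    ∀ B : Set (Fin d → ℝ), MeasurableSet B → B ⊆ {x : Fin d → ℝ | 1 < r x} →
      ν (frontier B) = 0 →
      Tendsto (fun u : ℝ =>
          (μ {ω | X ω ∈ u • B}).toReal / (μ {ω | u < r (X ω)}).toReal)
        atTop (𝓝 ((ν B).toReal / (ν {x : Fin d → ℝ | 1 < r x}).toReal)) := by
  intro B hBm hBsub hBfr
  set Ωr : Set (Fin d → ℝ) := {x : Fin d → ℝ | 1 < r x} with hΩr
  obtain ⟨ε, hε, hεΩ⟩ := hΩaway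
  set t : ℝ := 2 / ε with htdef
  have ht : 0 < t := by positivity
  have htinv : t⁻¹ = ε / 2 := by rw [htdef, inv_div]
  have hΩm : MeasurableSet Ωr := measurableSet_lt measurable_const hr
  -- every point of the closure of a subset of Ωr has norm ≥ ε
  have hclos : ∀ S : Set (Fin d → ℝ), S ⊆ Ωr → ∀ x ∈ closure S, ε ≤ ‖x‖ := by
    intro S hS x hx
    have h1 : closure S ⊆ {x : Fin d → ℝ | ε ≤ ‖x‖} := by
      apply closure_minimal (fun y hy => hεΩ y (hS hy))
      exact isClosed_le continuous_const continuous_norm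
    exact h1 hx
  have hBfin : ν B ≠ ⊤ := fun h => hΩfin (top_le_iff.1 (h ▸ measure_mono hBsub))
  -- key facts about `t • S` for `S ⊆ Ωr`
  have key : ∀ S : Set (Fin d → ℝ), MeasurableSet S → S ⊆ Ωr → ν (frontier S) = 0 →
      MeasurableSet (t • S) ∧ (t • S) ⊆ {x | 1 < ‖x‖} ∧ ν (frontier (t • S)) = 0 ∧
        ν (t • S) = ENNReal.ofReal t⁻¹ * ν S := by
    intro S hSm hSsub hSfr
    have hmeas : MeasurableSet (t • S) := by
      have : t • S = (fun x : Fin d → ℝ => t⁻¹ • x) ⁻¹' S := by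
        ext x
        rw [mem_smul_set_iff_inv_smul_mem₀ ht.ne', mem_preimage]
      rw [this]
      exact hSm.preimage (measurable_const_smul t⁻¹)
    have hsub : (t • S) ⊆ {x | 1 < ‖x‖} := by
      rintro x ⟨b, hb, rfl⟩
      have hεb : ε ≤ ‖b‖ := hεΩ b (hSsub hb)
      have : t * ε ≤ ‖t • b‖ := by
        rw [norm_smul, Real.norm_eq_abs, abs_of_pos ht]
        exact mul_le_mul_of_nonneg_left hεb ht.le
      have h2 : t * ε = 2 := by rw [htdef]; field_simp
      simp only [mem_setOf_eq]
      linarith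
    have hfreq : frontier (t • S) = t • frontier S := by
      rw [frontier, closure_smul₀' ht.ne', interior_smul₀ ht.ne', ← smul_set_sdiff₀ ht.ne',
        frontier]
    have hfr0 : ν (frontier (t • S)) = 0 := by
      rw [hfreq, hνhom t ht (frontier S) isClosed_frontier.measurableSet
        ⟨ε, hε, fun x hx => hclos S hSsub x (frontier_subset_closure hx)⟩, hSfr, mul_zero]
    exact ⟨hmeas, hsub, hfr0, hνhom t ht S hSm ⟨ε, hε, fun x hx => hεΩ x (hSsub hx)⟩⟩
  obtain ⟨hBm', hBsub', hBfr', hBval⟩ := key B hBm hBsub hBfr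
  obtain ⟨hΩm', hΩsub', hΩfr', hΩval⟩ := key Ωr hΩm (fun x hx => hx) hΩfr
  -- the MRV limits for `t • B` and `t • Ωr`, composed with `u ↦ u / t`
  have htend : Tendsto (fun u : ℝ => u / t) atTop atTop :=
    Tendsto.atTop_div_const ht tendsto_id
  have hval : ∀ S : Set (Fin d → ℝ), ν S ≠ ⊤ → ν (t • S) = ENNReal.ofReal t⁻¹ * ν S →
      (ν (t • S)).toReal = t⁻¹ * (ν S).toReal := by
    intro S hfin hv
    rw [hv, ENNReal.toReal_mul, ENNReal.toReal_ofReal (by positivity)]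
  have h1 : Tendsto (fun u : ℝ =>
      (μ {ω | (u / t)⁻¹ • X ω ∈ t • B}).toReal / (μ {ω | u / t < ‖X ω‖}).toReal)
      atTop (𝓝 (t⁻¹ * (ν B).toReal)) := by
    have := (hMRV (t • B) hBm' hBsub' hBfr').comp htend
    rwa [hval B hBfin hBval] at this
  have h2 : Tendsto (fun u : ℝ =>
      (μ {ω | (u / t)⁻¹ • X ω ∈ t • Ωr}).toReal / (μ {ω | u / t < ‖X ω‖}).toReal)
      atTop (𝓝 (t⁻¹ * (ν Ωr).toReal)) := by
    have := (hMRV (t • Ωr) hΩm' hΩsub' hΩfr').comp htend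
    rwa [hval Ωr hΩfin hΩval] at this
  have hΩtr : (ν Ωr).toReal ≠ 0 := by
    have := ENNReal.toReal_pos hΩpos.ne' hΩfin
    exact this.ne'
  have hlim : Tendsto (fun u : ℝ =>
      ((μ {ω | (u / t)⁻¹ • X ω ∈ t • B}).toReal / (μ {ω | u / t < ‖X ω‖}).toReal) /
        ((μ {ω | (u / t)⁻¹ • X ω ∈ t • Ωr}).toReal / (μ {ω | u / t < ‖X ω‖}).toReal))
      atTop (𝓝 ((ν B).toReal / (ν Ωr).toReal)) := by
    have := h1.div h2 (mul_ne_zero (inv_ne_zero ht.ne') hΩtr)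
    rwa [mul_div_mul_left _ _ (inv_ne_zero ht.ne')] at this
  apply hlim.congr'
  filter_upwards [eventually_gt_atTop (0 : ℝ)] with u hu
  have hut : u / t ≠ 0 := (div_pos hu ht).ne'
  -- set identifications
  have hsetB : {ω | (u / t)⁻¹ • X ω ∈ t • B} = {ω | X ω ∈ u • B} := by
    ext ω
    rw [mem_setOf_eq, ← mem_smul_set_iff_inv_smul_mem₀ hut, smul_smul,
      div_mul_cancel₀ u ht.ne']
    rfl
  have hsetΩ : ∀ v : ℝ, 0 < v → {ω | v < r (X ω)} = {ω | X ω ∈ v • Ωr} := by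
    intro v hv
    ext ω
    simp only [mem_setOf_eq, mem_smul_set_iff_inv_smul_mem₀ hv.ne', hΩr, mem_setOf_eq,
      hrhom v⁻¹ (by positivity) (X ω)]
    rw [inv_mul_eq_div, lt_div_iff₀ hv, one_mul]
  have hsetΩ' : {ω | (u / t)⁻¹ • X ω ∈ t • Ωr} = {ω | X ω ∈ u • Ωr} := by
    ext ω
    rw [mem_setOf_eq, ← mem_smul_set_iff_inv_smul_mem₀ hut, smul_smul,
      div_mul_cancel₀ u ht.ne']
    rfl
  rw [hsetB, hsetΩ', hsetΩ u hu]
  -- inclusions giving the degenerate cases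
  have hsub1 : {ω | X ω ∈ u • B} ⊆ {ω | X ω ∈ u • Ωr} :=
    fun ω hω => smul_set_mono hBsub hω
  have hsub2 : {ω | X ω ∈ u • Ωr} ⊆ {ω | u / t < ‖X ω‖} := by
    rintro ω ⟨y, hy, hXy⟩
    have hεy : ε ≤ ‖y‖ := hεΩ y hy
    have : u * ε ≤ ‖X ω‖ := by
      rw [← hXy, norm_smul, Real.norm_eq_abs, abs_of_pos hu]
      exact mul_le_mul_of_nonneg_left hεy hu.le
    have h3 : u / t < u * ε := by
      rw [div_eq_mul_inv, htinv]
      nlinarith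
    simp only [mem_setOf_eq]
    linarith
  have hmono : ∀ S T : Set Ω, S ⊆ T → (μ T).toReal = 0 → (μ S).toReal = 0 := by
    intro S T hST hT
    have h1 : μ T = 0 := by
      have := measure_ne_top μ T
      exact (ENNReal.toReal_eq_zero_iff _).1 hT |>.resolve_right this
    have := measure_mono_null hST h1
    simp [this]
  exact (ratio_div_helper (hmono _ _ hsub1) (hmono _ _ hsub2)).symm
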